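/- For a < b, 1/2 < α < 1, and a < t < b, the function t ↦ K(a,t) is strictly decreasing; specifically ∂K(a,t)/∂t = -(1/Γ(α)²)(b-a)^{α-1}(b-t)^{α-1} - ((1-α)/Γ(α)²) ∫_t^b (s-a)^{α-2}(s-t)^{α-1} ds < 0. -/

import Mathlib

open Real MeasureTheory Set

/-- Kernel `K(x,t) = (1/Γ(α)²) ∫_{max{x,t}}^{b} (s-x)^{α-1}(s-t)^{α-1} ds`. -/
noncomputable def K (b α x t : ℝ) : ℝ :=
  (1 / Real.Gamma α ^ 2) * ∫ s in max x t..b, (s - x) ^ (α - 1) * (s - t) ^ (α - 1)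

/-- Green's function `G(x,t) = K(x,t) - K(a,t)K(x,a)/K(a,a)`. -/
noncomputable def G (a b α x t : ℝ) : ℝ :=
  K b α x t - K b α a t * K b α x a / K b α a a

open intervalIntegral


lemma sub_gen (a b α : ℝ) (hα0 : 0 < α) (p : ℝ) {τ : ℝ} (hτ : a < τ) (hτb : τ < b) :
    ∫ s in τ..b, (s - a) ^ p * (s - τ) ^ (α - 1)
      = (b - τ) ^ α * ∫ v in (0:ℝ)..1, (τ - a + v * (b - τ)) ^ p * v ^ (α - 1) := by
  have hcpos : (0:ℝ) < b - τ := by linarith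
  have hc : b - τ ≠ 0 := ne_of_gt hcpos
  have h := intervalIntegral.integral_comp_mul_add
    (a := 0) (b := 1) (fun s => (s - a) ^ p * (s - τ) ^ (α - 1)) hc τ
  simp only [mul_zero, zero_add, mul_one, smul_eq_mul] at h
  have hb' : b - τ + τ = b := by ring
  rw [hb'] at h
  have h2 : ∫ v in (0:ℝ)..1, ((b - τ) * v + τ - a) ^ p * ((b - τ) * v + τ - τ) ^ (α - 1)
      = (b - τ) ^ (α - 1) * ∫ v in (0:ℝ)..1, (τ - a + v * (b - τ)) ^ p * v ^ (α - 1) := by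
    rw [← intervalIntegral.integral_const_mul]
    apply intervalIntegral.integral_congr
    intro v hv
    rw [uIcc_of_le (by norm_num)] at hv
    have hv0 : 0 ≤ v := hv.1
    dsimp only
    have e1 : (b - τ) * v + τ - τ = (b - τ) * v := by ring
    rw [e1, Real.mul_rpow hcpos.le hv0]
    have e2 : (b - τ) * v + τ - a = τ - a + v * (b - τ) := by ring
    rw [e2]; ring
  rw [h2] at h
  have key : ∫ s in τ..b, (s - a) ^ p * (s - τ) ^ (α - 1)
      = (b - τ) * ((b - τ) ^ (α - 1) * ∫ v in (0:ℝ)..1, (τ - a + v * (b - τ)) ^ p * v ^ (α - 1)) := by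
    rw [h, ← mul_assoc, mul_inv_cancel₀ hc, one_mul]
  rw [key, ← mul_assoc]
  congr 1
  rw [← Real.rpow_one_add' hcpos.le (by intro hh; linarith : (1:ℝ) + (α - 1) ≠ 0)]
  · norm_num


lemma hL_pos (a b : ℝ) {t : ℝ} (ht : a < t) (htb : t ≤ b) :
    ∀ v ∈ Set.Icc (0:ℝ) 1, 0 < t - a + v * (b - t) := by
  intro v hv
  have : 0 ≤ v * (b - t) := mul_nonneg hv.1 (by linarith)
  linarith

lemma helper_cont (a b q : ℝ) {t : ℝ} (ht : a < t) (htb : t ≤ b) :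
    ContinuousOn (fun v : ℝ => (t - a + v * (b - t)) ^ q) (Set.uIcc 0 1) := by
  rw [Set.uIcc_of_le (by norm_num)]
  apply ContinuousOn.rpow_const
  · fun_prop
  · intro v hv
    exact Or.inl (ne_of_gt (hL_pos a b ht htb v hv))

lemma helper_int (a b α q : ℝ) (hα0 : 0 < α) {t : ℝ} (ht : a < t) (htb : t ≤ b) :
    IntervalIntegrable (fun v : ℝ => (t - a + v * (b - t)) ^ q * v ^ (α - 1)) volume 0 1 :=
  (intervalIntegral.intervalIntegrable_rpow' (by linarith)).continuousOn_mul
    (helper_cont a b q ht htb)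

lemma helper_int' (a b α q : ℝ) (hα0 : 0 < α) {t : ℝ} (ht : a < t) (htb : t ≤ b) :
    IntervalIntegrable (fun v : ℝ => (t - a + v * (b - t)) ^ q * v ^ α) volume 0 1 := by
  apply ContinuousOn.intervalIntegrable
  apply (helper_cont a b q ht htb).mul
  apply ContinuousOn.rpow_const continuousOn_id
  intro v _
  exact Or.inr hα0.le

lemma star2 (a b α : ℝ) (hα0 : 0 < α) (hα1 : α < 1) {t : ℝ} (ht : a < t) (htb : t < b) :
    α * (∫ v in (0:ℝ)..1, (t - a + v * (b - t)) ^ (α - 1) * v ^ (α - 1))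
      + (α - 1) * (b - t) * (∫ v in (0:ℝ)..1, (t - a + v * (b - t)) ^ (α - 2) * v ^ α)
      = (b - a) ^ (α - 1) := by
  set L : ℝ → ℝ := fun v => t - a + v * (b - t) with hLdef
  set g : ℝ → ℝ := fun v => L v ^ (α - 1) * v ^ α with hgdef
  set g' : ℝ → ℝ := fun v =>
    ((α - 1) * (b - t)) * (L v ^ (α - 2) * v ^ α) + α * (L v ^ (α - 1) * v ^ (α - 1)) with hg'def
  have hLpos := hL_pos a b ht htb.le
  have hcont : ContinuousOn g (Set.Icc 0 1) := by
    apply ContinuousOn.mul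
    · have := helper_cont a b (α - 1) ht htb.le
      rwa [Set.uIcc_of_le (by norm_num)] at this
    · exact ContinuousOn.rpow_const continuousOn_id (fun v _ => Or.inr hα0.le)
  have hderiv : ∀ v ∈ Set.Ioo (0:ℝ) 1, HasDerivWithinAt g (g' v) (Set.Ioi v) v := by
    intro v hv
    have hv0 : 0 < v := hv.1
    have hLv : 0 < L v := hLpos v ⟨hv0.le, hv.2.le⟩
    have hu : HasDerivAt L (b - t) v := by
      simpa [hLdef] using ((hasDerivAt_id v).mul_const (b - t)).const_add (t - a)
    have h1 := hu.rpow_const (p := α - 1) (Or.inl (ne_of_gt hLv))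
    rw [show α - 1 - 1 = α - 2 by ring] at h1
    have h2 : HasDerivAt (fun v : ℝ => v ^ α) (α * v ^ (α - 1)) v :=
      Real.hasDerivAt_rpow_const (Or.inl hv0.ne')
    have := h1.mul h2
    apply HasDerivAt.hasDerivWithinAt
    refine this.congr_deriv ?_
    simp only [hg'def]
    ring
  have hint : IntervalIntegrable g' volume 0 1 :=
    ((helper_int' a b α (α - 2) hα0 ht htb.le).const_mul _).add
      ((helper_int a b α (α - 1) hα0 ht htb.le).const_mul _)
  have hFTC := intervalIntegral.integral_eq_sub_of_hasDeriv_right_of_le (by norm_num)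
    hcont hderiv hint
  have hg1 : g 1 = (b - a) ^ (α - 1) := by
    show (t - a + 1 * (b - t)) ^ (α - 1) * (1:ℝ) ^ α = _
    rw [show t - a + 1 * (b - t) = b - a by ring, Real.one_rpow, mul_one]
  have hg0 : g 0 = 0 := by
    simp [hgdef, Real.zero_rpow hα0.ne']
  rw [hg1, hg0, sub_zero] at hFTC
  rw [← hFTC, hg'def]
  rw [intervalIntegral.integral_add ((helper_int' a b α (α - 2) hα0 ht htb.le).const_mul _)
      ((helper_int a b α (α - 1) hα0 ht htb.le).const_mul _),
    intervalIntegral.integral_const_mul, intervalIntegral.integral_const_mul]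
  ring

lemma hasDerivAt_J (a b α : ℝ) (hα0 : 0 < α) (hα1 : α < 1) {t : ℝ} (ht : a < t) (htb : t < b) :
    HasDerivAt (fun τ : ℝ => ∫ v in (0:ℝ)..1, (τ - a + v * (b - τ)) ^ (α - 1) * v ^ (α - 1))
      ((α - 1) * ((∫ v in (0:ℝ)..1, (t - a + v * (b - t)) ^ (α - 2) * v ^ (α - 1))
        - ∫ v in (0:ℝ)..1, (t - a + v * (b - t)) ^ (α - 2) * v ^ α)) t := by
  set F : ℝ → ℝ → ℝ := fun τ v => (τ - a + v * (b - τ)) ^ (α - 1) * v ^ (α - 1) with hF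
  set F' : ℝ → ℝ → ℝ :=
    fun τ v => ((α - 1) * (τ - a + v * (b - τ)) ^ (α - 2) * (1 - v)) * v ^ (α - 1) with hF'
  set ε : ℝ := min (t - a) (b - t) / 2 with hε
  have hεpos : 0 < ε := by
    have := lt_min (by linarith : (0:ℝ) < t - a) (by linarith : (0:ℝ) < b - t)
    simp only [hε]; linarith
  set m : ℝ := (t - a) / 2 with hm
  have hmpos : 0 < m := by simp only [hm]; linarith
  have hball : ∀ τ ∈ Metric.ball t ε, a < τ ∧ τ < b ∧ m ≤ τ - a := by
    intro τ hτ
    rw [Metric.mem_ball, Real.dist_eq, abs_lt] at hτ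
    have h1 : ε ≤ (t - a) / 2 := by simp only [hε]; have := min_le_left (t - a) (b - t); linarith
    have h2 : ε ≤ (b - t) / 2 := by simp only [hε]; have := min_le_right (t - a) (b - t); linarith
    refine ⟨by linarith, by linarith, by simp only [hm]; linarith⟩
  have hLb : ∀ τ, a < τ → τ < b → m ≤ τ - a → ∀ v ∈ Set.Ioc (0:ℝ) 1,
      m ≤ τ - a + v * (b - τ) ∧ 0 < τ - a + v * (b - τ) := by
    intro τ hτ1 hτ2 hτ3 v hv
    have : 0 ≤ v * (b - τ) := mul_nonneg hv.1.le (by linarith)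
    constructor <;> linarith
  have hcontL : ∀ τ, a < τ → τ < b → ∀ q : ℝ,
      ContinuousOn (fun v : ℝ => (τ - a + v * (b - τ)) ^ q) (Set.Ioc 0 1) := by
    intro τ hτ1 hτ2 q
    apply ContinuousOn.rpow_const (by fun_prop)
    intro v hv
    have h0 : 0 ≤ v * (b - τ) := mul_nonneg hv.1.le (by linarith)
    have hp : 0 < τ - a + v * (b - τ) := by linarith
    exact Or.inl hp.ne'
  have hcontv : ∀ q : ℝ, ContinuousOn (fun v : ℝ => v ^ q) (Set.Ioc (0:ℝ) 1) := by
    intro q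
    exact ContinuousOn.rpow_const continuousOn_id (fun v hv => Or.inl (ne_of_gt hv.1))
  have meas : ∀ᶠ τ in nhds t, AEStronglyMeasurable (F τ) (volume.restrict (Set.uIoc 0 1)) := by
    filter_upwards [Metric.ball_mem_nhds t hεpos] with τ hτ
    obtain ⟨hτ1, hτ2, _⟩ := hball τ hτ
    apply ContinuousOn.aestronglyMeasurable _ measurableSet_uIoc
    rw [Set.uIoc_of_le (by norm_num)]
    exact (hcontL τ hτ1 hτ2 (α - 1)).mul (hcontv (α - 1))
  have meas' : AEStronglyMeasurable (F' t) (volume.restrict (Set.uIoc 0 1)) := by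
    apply ContinuousOn.aestronglyMeasurable _ measurableSet_uIoc
    rw [Set.uIoc_of_le (by norm_num)]
    apply ContinuousOn.mul _ (hcontv (α - 1))
    apply ContinuousOn.mul _ (by fun_prop : ContinuousOn (fun v : ℝ => 1 - v) (Set.Ioc 0 1))
    exact continuousOn_const.mul (hcontL t ht htb (α - 2))
  have hFint : IntervalIntegrable (F t) volume 0 1 := helper_int a b α (α - 1) hα0 ht htb.le
  have h_bound : ∀ᵐ v ∂volume, v ∈ Set.uIoc (0:ℝ) 1 → ∀ τ ∈ Metric.ball t ε,
      ‖F' τ v‖ ≤ ((1 - α) * m ^ (α - 2)) * v ^ (α - 1) := by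
    apply Filter.Eventually.of_forall
    intro v hv τ hτ
    rw [Set.uIoc_of_le (by norm_num)] at hv
    obtain ⟨hτ1, hτ2, hτ3⟩ := hball τ hτ
    obtain ⟨hL1, hL2⟩ := hLb τ hτ1 hτ2 hτ3 v hv
    obtain ⟨hv1, hv2⟩ := hv
    have hvpow : (0:ℝ) ≤ v ^ (α - 1) := Real.rpow_nonneg hv1.le _
    have hLpow : (0:ℝ) ≤ (τ - a + v * (b - τ)) ^ (α - 2) := Real.rpow_nonneg hL2.le _
    have hnp : F' τ v ≤ 0 := by
      apply mul_nonpos_of_nonpos_of_nonneg _ hvpow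
      apply mul_nonpos_of_nonpos_of_nonneg _ (by linarith : (0:ℝ) ≤ 1 - v)
      exact mul_nonpos_of_nonpos_of_nonneg (by linarith) hLpow
    rw [Real.norm_eq_abs, abs_of_nonpos hnp]
    have key : -F' τ v = (1 - α) * ((τ - a + v * (b - τ)) ^ (α - 2) * ((1 - v) * v ^ (α - 1))) := by
      simp only [hF']; ring
    rw [key]
    have h1 : (τ - a + v * (b - τ)) ^ (α - 2) ≤ m ^ (α - 2) :=
      Real.rpow_le_rpow_of_nonpos hmpos hL1 (by linarith)
    have h2 : (1 - v) * v ^ (α - 1) ≤ 1 * v ^ (α - 1) :=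
      mul_le_mul_of_nonneg_right (by linarith [hv2]) hvpow
    calc (1 - α) * ((τ - a + v * (b - τ)) ^ (α - 2) * ((1 - v) * v ^ (α - 1)))
        ≤ (1 - α) * (m ^ (α - 2) * (1 * v ^ (α - 1))) := by
          apply mul_le_mul_of_nonneg_left _ (by linarith : (0:ℝ) ≤ 1 - α)
          exact mul_le_mul h1 h2 (mul_nonneg (by linarith [hv2]) hvpow)
            (Real.rpow_nonneg hmpos.le _)
      _ = ((1 - α) * m ^ (α - 2)) * v ^ (α - 1) := by ring
  have bound_int : IntervalIntegrable (fun v : ℝ => ((1 - α) * m ^ (α - 2)) * v ^ (α - 1))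
      volume 0 1 :=
    (intervalIntegral.intervalIntegrable_rpow' (by linarith)).const_mul _
  have h_diff : ∀ᵐ v ∂volume, v ∈ Set.uIoc (0:ℝ) 1 → ∀ τ ∈ Metric.ball t ε,
      HasDerivAt (fun τ => F τ v) (F' τ v) τ := by
    apply Filter.Eventually.of_forall
    intro v hv τ hτ
    rw [Set.uIoc_of_le (by norm_num)] at hv
    obtain ⟨hτ1, hτ2, hτ3⟩ := hball τ hτ
    obtain ⟨hL1, hL2⟩ := hLb τ hτ1 hτ2 hτ3 v hv
    have hu : HasDerivAt (fun τ : ℝ => τ - a + v * (b - τ)) (1 - v) τ := by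
      have e : (fun τ : ℝ => τ - a + v * (b - τ)) = fun τ => (1 - v) * τ + (v * b - a) :=
        funext fun τ => by ring
      rw [e]
      simpa using ((hasDerivAt_id τ).const_mul (1 - v)).add_const (v * b - a)
    have h1 := hu.rpow_const (p := α - 1) (Or.inl (ne_of_gt hL2))
    rw [show α - 1 - 1 = α - 2 by ring] at h1
    refine (h1.mul_const (v ^ (α - 1))).congr_deriv ?_
    simp only [hF']
    ring
  have res := intervalIntegral.hasDerivAt_integral_of_dominated_loc_of_deriv_le (Metric.ball_mem_nhds t hεpos)
    meas hFint meas' h_bound bound_int h_diff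
  have hDer := res.2
  have hval : (∫ v in (0:ℝ)..1, F' t v)
      = (α - 1) * ((∫ v in (0:ℝ)..1, (t - a + v * (b - t)) ^ (α - 2) * v ^ (α - 1))
        - ∫ v in (0:ℝ)..1, (t - a + v * (b - t)) ^ (α - 2) * v ^ α) := by
    have congr1 : (∫ v in (0:ℝ)..1, F' t v)
        = ∫ v in (0:ℝ)..1, ((α - 1) * ((t - a + v * (b - t)) ^ (α - 2) * v ^ (α - 1))
            + (-(α - 1)) * ((t - a + v * (b - t)) ^ (α - 2) * v ^ α)) := by
      apply intervalIntegral.integral_congr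
      intro v hv
      rw [Set.uIcc_of_le (by norm_num)] at hv
      simp only [hF']
      rcases eq_or_lt_of_le hv.1 with h0 | h0
      · rw [← h0]
        rw [Real.zero_rpow (by linarith : α - 1 ≠ 0), Real.zero_rpow (by linarith : α ≠ 0)]
        ring
      · have : v ^ α = v * v ^ (α - 1) := by
          rw [show α = 1 + (α - 1) by ring, Real.rpow_add h0, Real.rpow_one]
          ring_nf
        rw [this]
        ring
    rw [congr1, intervalIntegral.integral_add
        ((helper_int a b α (α - 2) hα0 ht htb.le).const_mul _)
        ((helper_int' a b α (α - 2) hα0 ht htb.le).const_mul _),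
      intervalIntegral.integral_const_mul, intervalIntegral.integral_const_mul]
    ring
  rw [hval] at hDer
  exact hDer


lemma main_deriv (a b α : ℝ) (hα0 : 0 < α) (hα1 : α < 1) {t : ℝ} (ht : a < t) (htb : t < b) :
    HasDerivAt (fun τ => ∫ s in τ..b, (s - a) ^ (α - 1) * (s - τ) ^ (α - 1))
      (-((b - a) ^ (α - 1) * (b - t) ^ (α - 1))
        - (1 - α) * ∫ s in t..b, (s - a) ^ (α - 2) * (s - t) ^ (α - 1)) t := by
  have hJ := hasDerivAt_J a b α hα0 hα1 ht htb
  have hu : HasDerivAt (fun τ : ℝ => b - τ) (-1) t := by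
    simpa using (hasDerivAt_id t).const_sub b
  have hB := hu.rpow_const (p := α) (Or.inl (ne_of_gt (by linarith : (0:ℝ) < b - t)))
  have hprod := hB.mul hJ
  have heq : (fun τ => ∫ s in τ..b, (s - a) ^ (α - 1) * (s - τ) ^ (α - 1)) =ᶠ[nhds t]
      (fun τ => (b - τ) ^ α
        * ∫ v in (0:ℝ)..1, (τ - a + v * (b - τ)) ^ (α - 1) * v ^ (α - 1)) := by
    filter_upwards [Ioo_mem_nhds ht htb] with τ hτ
    exact sub_gen a b α hα0 (α - 1) hτ.1 hτ.2
  have final := hprod.congr_of_eventuallyEq heq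
  have hQ : (b - t) ^ α = (b - t) * (b - t) ^ (α - 1) := by
    rw [← Real.rpow_one_add' (by linarith : (0:ℝ) ≤ b - t)
      (by intro h; linarith : (1:ℝ) + (α - 1) ≠ 0)]
    norm_num
  refine final.congr_deriv ?_
  beta_reduce
  rw [sub_gen a b α hα0 (α - 2) ht htb, ← star2 a b α hα0 hα1 ht htb, hQ]
  ring

theorem K_a_t_deriv_neg (a b α : ℝ) (hab : a < b) (hα₁ : 1 / 2 < α) (hα₂ : α < 1) :
    (∀ t ∈ Set.Ioo a b,
        HasDerivAt (fun τ => K b α a τ)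
          (-(1 / Real.Gamma α ^ 2) * ((b - a) ^ (α - 1) * (b - t) ^ (α - 1)) -
            (1 - α) / Real.Gamma α ^ 2 * ∫ s in t..b, (s - a) ^ (α - 2) * (s - t) ^ (α - 1)) t ∧
        -(1 / Real.Gamma α ^ 2) * ((b - a) ^ (α - 1) * (b - t) ^ (α - 1)) -
            (1 - α) / Real.Gamma α ^ 2 * ∫ s in t..b, (s - a) ^ (α - 2) * (s - t) ^ (α - 1)
          < 0) ∧
      StrictAntiOn (fun t => K b α a t) (Set.Ioo a b) := by
  have hα0 : (0:ℝ) < α := by linarith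
  have hΓ : 0 < Real.Gamma α := Real.Gamma_pos_of_pos hα0
  have key : ∀ t ∈ Set.Ioo a b, HasDerivAt (fun τ => K b α a τ)
      (-(1 / Real.Gamma α ^ 2) * ((b - a) ^ (α - 1) * (b - t) ^ (α - 1)) -
        (1 - α) / Real.Gamma α ^ 2 * ∫ s in t..b, (s - a) ^ (α - 2) * (s - t) ^ (α - 1)) t := by
    intro t ht
    obtain ⟨ht1, ht2⟩ := ht
    have hmain := (main_deriv a b α hα0 hα₂ ht1 ht2).const_mul (1 / Real.Gamma α ^ 2)
    have heq : (fun τ => K b α a τ) =ᶠ[nhds t] (fun τ =>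
        (1 / Real.Gamma α ^ 2) * ∫ s in τ..b, (s - a) ^ (α - 1) * (s - τ) ^ (α - 1)) := by
      filter_upwards [Ioo_mem_nhds ht1 ht2] with τ hτ
      simp only [K, max_eq_right hτ.1.le]
    have hd := hmain.congr_of_eventuallyEq heq
    refine hd.congr_deriv ?_
    ring
  have neg : ∀ t ∈ Set.Ioo a b,
      -(1 / Real.Gamma α ^ 2) * ((b - a) ^ (α - 1) * (b - t) ^ (α - 1)) -
        (1 - α) / Real.Gamma α ^ 2 * (∫ s in t..b, (s - a) ^ (α - 2) * (s - t) ^ (α - 1)) < 0 := by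
    intro t ht
    obtain ⟨ht1, ht2⟩ := ht
    have P : 0 < (b - a) ^ (α - 1) * (b - t) ^ (α - 1) :=
      mul_pos (Real.rpow_pos_of_pos (by linarith) _) (Real.rpow_pos_of_pos (by linarith) _)
    have I0 : 0 ≤ ∫ s in t..b, (s - a) ^ (α - 2) * (s - t) ^ (α - 1) := by
      apply intervalIntegral.integral_nonneg ht2.le
      intro s hs
      exact mul_nonneg (Real.rpow_nonneg (by linarith [hs.1]) _)
        (Real.rpow_nonneg (by linarith [hs.1]) _)
    have hg1 : 0 < 1 / Real.Gamma α ^ 2 := by positivity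
    have hg2 : 0 < (1 - α) / Real.Gamma α ^ 2 := div_pos (by linarith) (by positivity)
    nlinarith [mul_pos hg1 P, mul_nonneg hg2.le I0]
  exact ⟨fun t ht => ⟨key t ht, neg t ht⟩,
    strictAntiOn_of_deriv_neg (convex_Ioo a b)
      (fun x hx => (key x hx).differentiableAt.continuousAt.continuousWithinAt)
      (fun x hx => by
        rw [interior_Ioo] at hx
        rw [(key x hx).deriv]
        exact neg x hx)⟩
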